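/- arXiv:2403.08183 — 2 statements merged into one kernel-verified Lean document; each statement's English description precedes it below -/
import Mathlib

section
/- Suppose potential outcomes depend only on the K'-neighborhood treatment subvector for some K' ≤ K (i.e., Y_i(d) = Y_i(d') whenever d_{N(i,K')} = d'_{N(i,K')}). Then under unconfoundedness and the exposure-mapping pinning condition, τ(t,t') = τ*(t,t'), and hence τ(t,t') satisfies K-neighborhood sign preservation. -/
open Finset
open scoped Classical

noncomputable section

/-- Probability of event `A` under mass function `p` on a finite space. -/
def prb {Ω : Type*} [Fintype Ω] (p : Ω → ℝ) (A : Ω → Prop) : ℝ :=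
  ∑ ω, if A ω then p ω else 0

/-- Unnormalized expectation of `f` on the event `A`. -/
def eiv {Ω : Type*} [Fintype Ω] (p : Ω → ℝ) (f : Ω → ℝ) (A : Ω → Prop) : ℝ :=
  ∑ ω, if A ω then p ω * f ω else 0

/-- Expectation of `f`. -/
def expv {Ω : Type*} [Fintype Ω] (p : Ω → ℝ) (f : Ω → ℝ) : ℝ := ∑ ω, p ω * f ω

/-- Conditional expectation of `f` given the event `A`. -/
def cexp {Ω : Type*} [Fintype Ω] (p : Ω → ℝ) (f : Ω → ℝ) (A : Ω → Prop) : ℝ :=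
  eiv p f A / prb p A

/-- Conditional probability of `A` given `B`. -/
def cpr {Ω : Type*} [Fintype Ω] (p : Ω → ℝ) (A B : Ω → Prop) : ℝ :=
  prb p (fun ω => A ω ∧ B ω) / prb p B

/-- Real value of a boolean treatment. -/
def bR : Bool → ℝ := fun x => if x then 1 else 0

section Framework

variable {Ω : Type*} [Fintype Ω] {n : ℕ} {E : Type*}

/-- The assignment vector equal to `δ i` on the `K`-neighborhood `N i` and to `d` outside it:
`(δᵢ, d₋N(i,K))`. -/
def pin (N : Fin n → Finset (Fin n)) (δ : Fin n → Fin n → Bool) (i : Fin n)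
    (d : Fin n → Bool) : Fin n → Bool :=
  fun j => if j ∈ N i then δ i j else d j

/-- The exposure-mapping estimand
`τ(t,t') = (1/mₙ) Σ_{i∈ℳₙ} (E[Yᵢ | Tᵢ = t, 𝒞ᵢ] − E[Yᵢ | Tᵢ = t', 𝒞ᵢ])`,
where `Tᵢ = f(i, D)` and the event `C i` is the conditioning value of the controls `𝒞ᵢ`. -/
def tauE (p : Ω → ℝ) (Y : Fin n → (Fin n → Bool) → Ω → ℝ) (D : Ω → Fin n → Bool)
    (C : Fin n → Ω → Prop) (f : Fin n → (Fin n → Bool) → E) (M : Finset (Fin n))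
    (t t' : E) : ℝ :=
  (M.card : ℝ)⁻¹ * ∑ i ∈ M,
    (cexp p (fun ω => Y i (D ω) ω) (fun ω => f i (D ω) = t ∧ C i ω) -
     cexp p (fun ω => Y i (D ω) ω) (fun ω => f i (D ω) = t' ∧ C i ω))

/-- `τ*(t,t') = (1/mₙ) Σ_{i∈ℳₙ} Σ_d E[Yᵢ(d) − Yᵢ(δᵢ, d₋N(i,K)) | 𝒞ᵢ] · P(D = d | Tᵢ = t, 𝒞ᵢ)`. -/
def tauStarE (p : Ω → ℝ) (Y : Fin n → (Fin n → Bool) → Ω → ℝ) (D : Ω → Fin n → Bool)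
    (C : Fin n → Ω → Prop) (f : Fin n → (Fin n → Bool) → E) (M : Finset (Fin n))
    (N : Fin n → Finset (Fin n)) (δ : Fin n → Fin n → Bool) (t : E) : ℝ :=
  (M.card : ℝ)⁻¹ * ∑ i ∈ M, ∑ d : Fin n → Bool,
    cexp p (fun ω => Y i d ω - Y i (pin N δ i d) ω) (C i) *
      cpr p (fun ω => D ω = d) (fun ω => f i (D ω) = t ∧ C i ω)

/-- The bias term
`ℛₙ = (1/mₙ) Σ_{i∈ℳₙ} Σ_d E[Yᵢ(δᵢ, d₋N(i,K)) | 𝒞ᵢ] (P(D=d | Tᵢ=t, 𝒞ᵢ) − P(D=d | Tᵢ=t', 𝒞ᵢ))`. -/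
def RnE (p : Ω → ℝ) (Y : Fin n → (Fin n → Bool) → Ω → ℝ) (D : Ω → Fin n → Bool)
    (C : Fin n → Ω → Prop) (f : Fin n → (Fin n → Bool) → E) (M : Finset (Fin n))
    (N : Fin n → Finset (Fin n)) (δ : Fin n → Fin n → Bool) (t t' : E) : ℝ :=
  (M.card : ℝ)⁻¹ * ∑ i ∈ M, ∑ d : Fin n → Bool,
    cexp p (fun ω => Y i (pin N δ i d) ω) (C i) *
      (cpr p (fun ω => D ω = d) (fun ω => f i (D ω) = t ∧ C i ω) -
       cpr p (fun ω => D ω = d) (fun ω => f i (D ω) = t' ∧ C i ω))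

end Framework


section AuxHelpers

variable {Ω : Type*} [Fintype Ω]

lemma aux_prb_eq_eiv_one (p : Ω → ℝ) (A : Ω → Prop) : prb p A = eiv p (fun _ => 1) A := by
  unfold prb eiv
  refine Finset.sum_congr rfl fun ω _ => ?_
  split_ifs <;> simp

lemma aux_prb_nonneg (p : Ω → ℝ) (hp : ∀ ω, 0 ≤ p ω) (A : Ω → Prop) : 0 ≤ prb p A := by
  unfold prb
  refine Finset.sum_nonneg fun ω _ => ?_
  split_ifs
  · exact hp ω
  · exact le_refl 0

lemma aux_eiv_nonneg (p : Ω → ℝ) (hp : ∀ ω, 0 ≤ p ω) (f : Ω → ℝ) (A : Ω → Prop)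
    (hf : ∀ ω, A ω → 0 ≤ f ω) : 0 ≤ eiv p f A := by
  unfold eiv
  refine Finset.sum_nonneg fun ω _ => ?_
  split_ifs with h
  · exact mul_nonneg (hp ω) (hf ω h)
  · exact le_refl 0

lemma aux_eiv_nonpos (p : Ω → ℝ) (hp : ∀ ω, 0 ≤ p ω) (f : Ω → ℝ) (A : Ω → Prop)
    (hf : ∀ ω, A ω → f ω ≤ 0) : eiv p f A ≤ 0 := by
  unfold eiv
  refine Finset.sum_nonpos fun ω _ => ?_
  split_ifs with h
  · exact mul_nonpos_of_nonneg_of_nonpos (hp ω) (hf ω h)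
  · exact le_refl 0

lemma aux_eiv_congr (p : Ω → ℝ) {f g : Ω → ℝ} {A B : Ω → Prop}
    (hAB : ∀ ω, A ω ↔ B ω) (hfg : ∀ ω, B ω → f ω = g ω) :
    eiv p f A = eiv p g B := by
  unfold eiv
  refine Finset.sum_congr rfl fun ω _ => ?_
  by_cases h : B ω
  · rw [if_pos ((hAB ω).mpr h), if_pos h, hfg ω h]
  · rw [if_neg (fun hA => h ((hAB ω).mp hA)), if_neg h]

lemma aux_prb_congr (p : Ω → ℝ) {A B : Ω → Prop} (hAB : ∀ ω, A ω ↔ B ω) :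
    prb p A = prb p B := by
  rw [aux_prb_eq_eiv_one, aux_prb_eq_eiv_one]
  exact aux_eiv_congr p hAB (fun _ _ => rfl)

lemma aux_eiv_false (p : Ω → ℝ) (f : Ω → ℝ) {A : Ω → Prop} (h : ∀ ω, ¬ A ω) :
    eiv p f A = 0 := by
  unfold eiv
  exact Finset.sum_eq_zero fun ω _ => if_neg (h ω)

lemma aux_prb_false (p : Ω → ℝ) {A : Ω → Prop} (h : ∀ ω, ¬ A ω) :
    prb p A = 0 := by
  unfold prb
  exact Finset.sum_eq_zero fun ω _ => if_neg (h ω)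

lemma aux_eiv_sub (p : Ω → ℝ) (f g : Ω → ℝ) (A : Ω → Prop) :
    eiv p (fun ω => f ω - g ω) A = eiv p f A - eiv p g A := by
  unfold eiv
  rw [← Finset.sum_sub_distrib]
  refine Finset.sum_congr rfl fun ω _ => ?_
  split_ifs <;> ring

lemma aux_eiv_decomp {n : ℕ} (p : Ω → ℝ) (h : Ω → ℝ) (D : Ω → Fin n → Bool)
    (A : Ω → Prop) :
    eiv p h A = ∑ d : Fin n → Bool, eiv p h (fun ω => D ω = d ∧ A ω) := by
  unfold eiv
  rw [Finset.sum_comm]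
  refine Finset.sum_congr rfl fun ω _ => ?_
  rw [Finset.sum_eq_single (D ω)]
  · by_cases h' : A ω <;> simp [h']
  · intro d _ hd
    rw [if_neg]
    rintro ⟨h1, _⟩
    exact hd h1.symm
  · intro h'
    exact absurd (Finset.mem_univ _) h'

lemma aux_prb_decomp {n : ℕ} (p : Ω → ℝ) (D : Ω → Fin n → Bool) (A : Ω → Prop) :
    prb p A = ∑ d : Fin n → Bool, prb p (fun ω => D ω = d ∧ A ω) := by
  simp only [aux_prb_eq_eiv_one]
  exact aux_eiv_decomp p _ D A

end AuxHelpers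

/-- Proposition 2: if potential outcomes depend only on the `K'`-neighborhood
treatment subvector for some `K' ≤ K` (formalized by `N' i ⊆ N i` and `Yᵢ` depending on `d`
only through `d_{N'(i)}`), then under unconfoundedness and the pinning condition
`τ(t,t') = τ*(t,t')`, and hence `τ(t,t')` satisfies K-neighborhood sign preservation. -/
theorem stmt9 {Ω : Type*} [Fintype Ω] {n : ℕ} {E : Type*}
    (p : Ω → ℝ) (hp : ∀ ω, 0 ≤ p ω) (hp1 : ∑ ω, p ω = 1)
    (Y : Fin n → (Fin n → Bool) → Ω → ℝ) (D : Ω → Fin n → Bool)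
    (C : Fin n → Ω → Prop) (N N' : Fin n → Finset (Fin n))
    (f : Fin n → (Fin n → Bool) → E) (M : Finset (Fin n))
    (t t' : E) (δ : Fin n → Fin n → Bool)
    (hf : ∀ (i : Fin n) (d d' : Fin n → Bool), (∀ j ∈ N i, d j = d' j) → f i d = f i d')
    (hpin : ∀ (i : Fin n) (d : Fin n → Bool), f i d = t' → ∀ j ∈ N i, d j = δ i j)
    (hunc : ∀ (i : Fin n) (d dvec : Fin n → Bool),
      eiv p (fun ω => Y i d ω) (fun ω => D ω = dvec ∧ C i ω) * prb p (C i) =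
        eiv p (fun ω => Y i d ω) (C i) * prb p (fun ω => D ω = dvec ∧ C i ω))
    (hC : ∀ i ∈ M, 0 < prb p (C i))
    (hposT : ∀ i ∈ M, 0 < prb p (fun ω => f i (D ω) = t ∧ C i ω))
    (hposT' : ∀ i ∈ M, 0 < prb p (fun ω => f i (D ω) = t' ∧ C i ω))
    -- local interference: the `K'`-neighborhoods are contained in the `K`-neighborhoods
    (hsub : ∀ i, N' i ⊆ N i)
    -- and potential outcomes depend only on the `K'`-neighborhood treatment subvector
    (hlocY : ∀ (i : Fin n) (d d' : Fin n → Bool), (∀ j ∈ N' i, d j = d' j) →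
      ∀ ω, Y i d ω = Y i d' ω) :
    tauE p Y D C f M t t' = tauStarE p Y D C f M N δ t ∧
    ((∀ i ∈ M, ∀ (d d' : Fin n → Bool), (∀ j ∉ N i, d j = d' j) →
        f i d = t → f i d' = t' → ∀ ω, Y i d' ω ≤ Y i d ω) →
      0 ≤ tauE p Y D C f M t t') ∧
    ((∀ i ∈ M, ∀ (d d' : Fin n → Bool), (∀ j ∉ N i, d j = d' j) →
        f i d = t → f i d' = t' → ∀ ω, Y i d ω ≤ Y i d' ω) →
      tauE p Y D C f M t t' ≤ 0) := by
  -- the pinned vector agrees with δ i on N i, hence with δ i on N' i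
  have hpin_mem : ∀ (i : Fin n) (d : Fin n → Bool) (j : Fin n), j ∈ N i →
      pin N δ i d j = δ i j := by
    intro i d j hj; simp [pin, hj]
  have hpin_not : ∀ (i : Fin n) (d : Fin n → Bool) (j : Fin n), j ∉ N i →
      pin N δ i d j = d j := by
    intro i d j hj; simp [pin, hj]
  -- the pinned outcome is constant in d
  have hpinY : ∀ (i : Fin n) (d : Fin n → Bool) (ω : Ω),
      Y i (pin N δ i d) ω = Y i (δ i) ω := by
    intro i d ω
    exact hlocY i _ _ (fun j hj => hpin_mem i d j (hsub i hj)) ω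
  -- for i ∈ M, f of the pinned vector equals t'
  have hpinf : ∀ i ∈ M, ∀ d : Fin n → Bool, f i (pin N δ i d) = t' := by
    intro i hi d
    have hex : ∃ ω, f i (D ω) = t' ∧ C i ω := by
      by_contra hcon
      simp only [not_exists] at hcon
      have h0 : prb p (fun ω => f i (D ω) = t' ∧ C i ω) = 0 := aux_prb_false p hcon
      have := hposT' i hi
      linarith
    obtain ⟨ω0, hω0, -⟩ := hex
    have hDδ : ∀ j ∈ N i, D ω0 j = δ i j := hpin i (D ω0) hω0
    rw [← hω0]
    refine hf i _ _ fun j hj => ?_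
    rw [hpin_mem i d j hj, hDδ j hj]
  -- the key per-unit identity
  have key : ∀ i ∈ M,
      (cexp p (fun ω => Y i (D ω) ω) (fun ω => f i (D ω) = t ∧ C i ω) -
       cexp p (fun ω => Y i (D ω) ω) (fun ω => f i (D ω) = t' ∧ C i ω)) =
      ∑ d : Fin n → Bool,
        cexp p (fun ω => Y i d ω - Y i (pin N δ i d) ω) (C i) *
          cpr p (fun ω => D ω = d) (fun ω => f i (D ω) = t ∧ C i ω) := by
    intro i hi
    have hCpos := hC i hi
    have hTpos := hposT i hi
    have hT'pos := hposT' i hi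
    -- eiv over the decomposed event, for exposure value t
    have hEt : ∀ d : Fin n → Bool,
        eiv p (fun ω => Y i (D ω) ω) (fun ω => D ω = d ∧ (f i (D ω) = t ∧ C i ω)) =
        if f i d = t then
          eiv p (fun ω => Y i d ω) (C i) / prb p (C i) *
            prb p (fun ω => D ω = d ∧ C i ω)
        else 0 := by
      intro d
      by_cases hfd : f i d = t
      · rw [if_pos hfd]
        have h1 : eiv p (fun ω => Y i (D ω) ω)
            (fun ω => D ω = d ∧ (f i (D ω) = t ∧ C i ω)) =
            eiv p (fun ω => Y i d ω) (fun ω => D ω = d ∧ C i ω) := by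
          refine aux_eiv_congr p (fun ω => ?_) (fun ω h => ?_)
          · constructor
            · rintro ⟨h1, _, h3⟩; exact ⟨h1, h3⟩
            · rintro ⟨h1, h3⟩
              refine ⟨h1, ?_, h3⟩
              rw [h1]; exact hfd
          · rw [h.1]
        rw [h1, div_mul_eq_mul_div, eq_div_iff hCpos.ne']
        exact hunc i d d
      · rw [if_neg hfd]
        refine aux_eiv_false p _ fun ω => ?_
        rintro ⟨h1, h2, -⟩
        exact hfd (by rw [← h1]; exact h2)
    -- similarly for the pinned (constant) outcome, for exposure value t'
    have hEt' : ∀ d : Fin n → Bool,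
        eiv p (fun ω => Y i (δ i) ω) (fun ω => D ω = d ∧ (f i (D ω) = t' ∧ C i ω)) =
        if f i d = t' then
          eiv p (fun ω => Y i (δ i) ω) (C i) / prb p (C i) *
            prb p (fun ω => D ω = d ∧ C i ω)
        else 0 := by
      intro d
      by_cases hfd : f i d = t'
      · rw [if_pos hfd]
        have h1 : eiv p (fun ω => Y i (δ i) ω)
            (fun ω => D ω = d ∧ (f i (D ω) = t' ∧ C i ω)) =
            eiv p (fun ω => Y i (δ i) ω) (fun ω => D ω = d ∧ C i ω) := by
          refine aux_eiv_congr p (fun ω => ?_) (fun ω _ => rfl)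
          constructor
          · rintro ⟨h1, _, h3⟩; exact ⟨h1, h3⟩
          · rintro ⟨h1, h3⟩
            refine ⟨h1, ?_, h3⟩
            rw [h1]; exact hfd
        rw [h1, div_mul_eq_mul_div, eq_div_iff hCpos.ne']
        exact hunc i (δ i) d
      · rw [if_neg hfd]
        refine aux_eiv_false p _ fun ω => ?_
        rintro ⟨h1, h2, -⟩
        exact hfd (by rw [← h1]; exact h2)
    -- probability versions
    have hPt : ∀ (s : E) (d : Fin n → Bool),
        prb p (fun ω => D ω = d ∧ (f i (D ω) = s ∧ C i ω)) =
        if f i d = s then prb p (fun ω => D ω = d ∧ C i ω) else 0 := by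
      intro s d
      by_cases hfd : f i d = s
      · rw [if_pos hfd]
        refine aux_prb_congr p fun ω => ?_
        constructor
        · rintro ⟨h1, _, h3⟩; exact ⟨h1, h3⟩
        · rintro ⟨h1, h3⟩
          refine ⟨h1, ?_, h3⟩
          rw [h1]; exact hfd
      · rw [if_neg hfd]
        refine aux_prb_false p fun ω => ?_
        rintro ⟨h1, h2, -⟩
        exact hfd (by rw [← h1]; exact h2)
    -- part A: conditional expectation given T = t
    have hA : cexp p (fun ω => Y i (D ω) ω) (fun ω => f i (D ω) = t ∧ C i ω) =
        ∑ d : Fin n → Bool, cexp p (fun ω => Y i d ω) (C i) *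
          cpr p (fun ω => D ω = d) (fun ω => f i (D ω) = t ∧ C i ω) := by
      unfold cexp cpr
      rw [aux_eiv_decomp p _ D, Finset.sum_div]
      refine Finset.sum_congr rfl fun d _ => ?_
      rw [hEt d, hPt t d]
      split_ifs with h
      · ring
      · simp
    -- part B: conditional expectation given T = t' equals the pinned expectation
    have hB : cexp p (fun ω => Y i (D ω) ω) (fun ω => f i (D ω) = t' ∧ C i ω) =
        cexp p (fun ω => Y i (δ i) ω) (C i) := by
      unfold cexp
      have h0 : eiv p (fun ω => Y i (D ω) ω) (fun ω => f i (D ω) = t' ∧ C i ω) =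
          eiv p (fun ω => Y i (δ i) ω) (fun ω => f i (D ω) = t' ∧ C i ω) := by
        refine aux_eiv_congr p (fun ω => Iff.rfl) fun ω h => ?_
        exact hlocY i (D ω) (δ i) (fun j hj => hpin i (D ω) h.1 j (hsub i hj)) ω
      have h1 : eiv p (fun ω => Y i (δ i) ω) (fun ω => f i (D ω) = t' ∧ C i ω) =
          eiv p (fun ω => Y i (δ i) ω) (C i) / prb p (C i) *
            prb p (fun ω => f i (D ω) = t' ∧ C i ω) := by
        rw [aux_eiv_decomp p _ D, aux_prb_decomp p D (fun ω => f i (D ω) = t' ∧ C i ω),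
          Finset.mul_sum]
        refine Finset.sum_congr rfl fun d _ => ?_
        rw [hEt' d, hPt t' d]
        split_ifs with h
        · rfl
        · simp
      rw [h0, h1, mul_div_assoc, div_self hT'pos.ne', mul_one]
    -- conditional probabilities sum to one
    have hSum1 : ∑ d : Fin n → Bool,
        cpr p (fun ω => D ω = d) (fun ω => f i (D ω) = t ∧ C i ω) = 1 := by
      unfold cpr
      rw [← Finset.sum_div, ← aux_prb_decomp p D (fun ω => f i (D ω) = t ∧ C i ω)]
      exact div_self hTpos.ne'
    -- the difference of conditional expectations inside the sum splits
    have hsplit : ∀ d : Fin n → Bool,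
        cexp p (fun ω => Y i d ω - Y i (pin N δ i d) ω) (C i) =
        cexp p (fun ω => Y i d ω) (C i) - cexp p (fun ω => Y i (δ i) ω) (C i) := by
      intro d
      unfold cexp
      rw [show (fun ω => Y i d ω - Y i (pin N δ i d) ω) =
          (fun ω => Y i d ω - Y i (δ i) ω) from funext fun ω => by rw [hpinY i d ω],
        aux_eiv_sub, sub_div]
    have hmain : ∑ d : Fin n → Bool,
        cexp p (fun ω => Y i d ω - Y i (pin N δ i d) ω) (C i) *
          cpr p (fun ω => D ω = d) (fun ω => f i (D ω) = t ∧ C i ω) =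
        (∑ d : Fin n → Bool, cexp p (fun ω => Y i d ω) (C i) *
          cpr p (fun ω => D ω = d) (fun ω => f i (D ω) = t ∧ C i ω)) -
          cexp p (fun ω => Y i (δ i) ω) (C i) := by
      calc ∑ d : Fin n → Bool,
            cexp p (fun ω => Y i d ω - Y i (pin N δ i d) ω) (C i) *
              cpr p (fun ω => D ω = d) (fun ω => f i (D ω) = t ∧ C i ω)
          = ∑ d : Fin n → Bool,
            (cexp p (fun ω => Y i d ω) (C i) *
              cpr p (fun ω => D ω = d) (fun ω => f i (D ω) = t ∧ C i ω) -
            cexp p (fun ω => Y i (δ i) ω) (C i) *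
              cpr p (fun ω => D ω = d) (fun ω => f i (D ω) = t ∧ C i ω)) := by
            refine Finset.sum_congr rfl fun d _ => ?_
            rw [hsplit d]; ring
        _ = (∑ d : Fin n → Bool, cexp p (fun ω => Y i d ω) (C i) *
              cpr p (fun ω => D ω = d) (fun ω => f i (D ω) = t ∧ C i ω)) -
            cexp p (fun ω => Y i (δ i) ω) (C i) *
              ∑ d : Fin n → Bool,
                cpr p (fun ω => D ω = d) (fun ω => f i (D ω) = t ∧ C i ω) := by
            rw [Finset.sum_sub_distrib, Finset.mul_sum]
        _ = _ := by rw [hSum1, mul_one]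
    rw [hA, hB, hmain]
  -- hence τ = τ*
  have htau : tauE p Y D C f M t t' = tauStarE p Y D C f M N δ t := by
    unfold tauE tauStarE
    exact congrArg _ (Finset.sum_congr rfl key)
  refine ⟨htau, ?_, ?_⟩
  · -- nonnegative case
    intro hmono
    rw [htau]
    unfold tauStarE
    refine mul_nonneg (by positivity) (Finset.sum_nonneg fun i hi => Finset.sum_nonneg fun d _ => ?_)
    by_cases hfd : f i d = t
    · refine mul_nonneg ?_ ?_
      · unfold cexp
        refine div_nonneg (aux_eiv_nonneg p hp _ _ fun ω _ => ?_) (aux_prb_nonneg p hp _)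
        have h := hmono i hi d (pin N δ i d) (fun j hj => (hpin_not i d j hj).symm)
          hfd (hpinf i hi d) ω
        linarith
      · unfold cpr
        exact div_nonneg (aux_prb_nonneg p hp _) (aux_prb_nonneg p hp _)
    · have h0 : cpr p (fun ω => D ω = d) (fun ω => f i (D ω) = t ∧ C i ω) = 0 := by
        unfold cpr
        rw [aux_prb_false p (A := fun ω => D ω = d ∧ (f i (D ω) = t ∧ C i ω))
          (fun ω => by rintro ⟨h1, h2, -⟩; exact hfd (by rw [← h1]; exact h2)), zero_div]
      rw [h0, mul_zero]
  · -- nonpositive case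
    intro hmono
    rw [htau]
    unfold tauStarE
    refine mul_nonpos_iff.mpr (Or.inl ⟨by positivity,
      Finset.sum_nonpos fun i hi => Finset.sum_nonpos fun d _ => ?_⟩)
    by_cases hfd : f i d = t
    · refine mul_nonpos_iff.mpr (Or.inr ⟨?_, ?_⟩)
      · unfold cexp
        refine div_nonpos_of_nonpos_of_nonneg (aux_eiv_nonpos p hp _ _ fun ω _ => ?_)
          (aux_prb_nonneg p hp _)
        have h := hmono i hi d (pin N δ i d) (fun j hj => (hpin_not i d j hj).symm)
          hfd (hpinf i hi d) ω
        linarith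
      · unfold cpr
        exact div_nonneg (aux_prb_nonneg p hp _) (aux_prb_nonneg p hp _)
    · have h0 : cpr p (fun ω => D ω = d) (fun ω => f i (D ω) = t ∧ C i ω) = 0 := by
        unfold cpr
        rw [aux_prb_false p (A := fun ω => D ω = d ∧ (f i (D ω) = t ∧ C i ω))
          (fun ω => by rintro ⟨h1, h2, -⟩; exact hfd (by rw [← h1]; exact h2)), zero_div]
      rw [h0, mul_zero]
end
end

section
/- If the assignment vector D ∈ {0,1}^n is exchangeable-free but satisfies, conditional on 𝒞_i, that all components are mutually independent, and T_i = f(D_{N(i,K)}) is any K-neighborhood exposure mapping with P(T_i = s | 𝒞_i) > 0, then E[Y_i | T_i = s, 𝒞_i] = Σ_{d} E[Y_i(d) | 𝒞_i] P(D_{N(i,K)} = d_{N(i,K)} | T_i=s, 𝒞_i) P(D_{−N(i,K)} = d_{−N(i,K)} | 𝒞_i), given unconfoundedness Y_i(·) ⊥ D | 𝒞_i. -/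
open Finset
open scoped Classical

noncomputable section

lemma ite_irrel {α : Sort*} {c : Prop} {h1 h2 : Decidable c} (a b : α) :
    @ite α c h1 a b = @ite α c h2 a b := by
  cases Subsingleton.elim h1 h2; rfl

lemma prb_congr {Ω : Type*} [Fintype Ω] (p : Ω → ℝ) {A B : Ω → Prop}
    (h : ∀ ω, A ω ↔ B ω) : prb p A = prb p B := by
  unfold prb
  exact Finset.sum_congr rfl fun ω _ => by rw [if_congr (h ω) rfl rfl]

lemma key_decomp {Ω : Type*} [Fintype Ω] {n : ℕ} (p : Ω → ℝ)
    (D : Ω → Fin n → Bool) (R : Ω → Prop) (Q : (Fin n → Bool) → Prop)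
    (h : (Fin n → Bool) → Ω → ℝ) :
    (∑ ω, if Q (D ω) ∧ R ω then p ω * h (D ω) ω else 0) =
    ∑ d : Fin n → Bool, if Q d then ∑ ω, if D ω = d ∧ R ω then p ω * h d ω else 0 else 0 := by
  have hd : ∀ d : Fin n → Bool,
      (if Q d then ∑ ω, if D ω = d ∧ R ω then p ω * h d ω else 0 else 0)
        = ∑ ω, if Q d ∧ D ω = d ∧ R ω then p ω * h d ω else 0 := by
    intro d
    split_ifs with hq
    · exact Finset.sum_congr rfl fun ω _ => by simp [hq]
    · exact (Finset.sum_eq_zero fun ω _ => by simp [hq]).symm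
  simp_rw [hd]
  rw [Finset.sum_comm]
  refine Finset.sum_congr rfl fun ω _ => ?_
  rw [Finset.sum_eq_single (D ω)]
  · by_cases hq : Q (D ω) <;> by_cases hr : R ω <;> simp [hq, hr]
  · intro d _ hne
    simp [(Ne.symm hne : D ω ≠ d)]
  · simp

lemma cpr_bool_sum {Ω : Type*} [Fintype Ω] (p : Ω → ℝ) (X : Ω → Bool) (Cc : Ω → Prop)
    (hC : prb p Cc ≠ 0) :
    cpr p (fun ω => X ω = true) Cc + cpr p (fun ω => X ω = false) Cc = 1 := by
  unfold cpr
  rw [← add_div, div_eq_one_iff_eq hC]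
  unfold prb
  rw [← Finset.sum_add_distrib]
  refine Finset.sum_congr rfl fun ω _ => ?_
  by_cases hc : Cc ω <;> cases hX : X ω <;> simp [hc, hX]

lemma block_prod {Ω : Type*} [Fintype Ω] {n : ℕ} (p : Ω → ℝ)
    (D : Ω → Fin n → Bool) (Cc : Ω → Prop) (d : Fin n → Bool) (S : Finset (Fin n))
    (hC : prb p Cc ≠ 0)
    (hind : ∀ d : Fin n → Bool,
      cpr p (fun ω => D ω = d) Cc = ∏ j, cpr p (fun ω => D ω j = d j) Cc) :
    cpr p (fun ω => ∀ j ∈ S, D ω j = d j) Cc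
      = ∏ j ∈ S, cpr p (fun ω => D ω j = d j) Cc := by
  set q : Fin n → Bool → ℝ := fun j b => cpr p (fun ω => D ω j = b) Cc with hq
  have hdecomp : prb p (fun ω => (∀ j ∈ S, D ω j = d j) ∧ Cc ω)
      = ∑ d' : Fin n → Bool, if (∀ j ∈ S, d' j = d j)
          then prb p (fun ω => D ω = d' ∧ Cc ω) else 0 := by
    have h0 := key_decomp p D Cc (fun d' => ∀ j ∈ S, d' j = d j) (fun _ _ => 1)
    simp only [mul_one] at h0
    refine Eq.trans ?_ (h0.trans ?_)
    · exact Finset.sum_congr rfl fun ω _ => ite_irrel _ _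
    · refine Finset.sum_congr rfl fun d' _ => ?_
      exact congrArg (fun x => if (∀ j ∈ S, d' j = d j) then x else 0)
        (Finset.sum_congr rfl fun ω _ => ite_irrel _ _)
  have step1 : cpr p (fun ω => ∀ j ∈ S, D ω j = d j) Cc
      = ∑ d' : Fin n → Bool, if (∀ j ∈ S, d' j = d j)
          then cpr p (fun ω => D ω = d') Cc else 0 := by
    unfold cpr
    rw [hdecomp, Finset.sum_div]
    exact Finset.sum_congr rfl fun d' _ => by split_ifs <;> simp
  rw [step1]
  set g : Fin n → Bool → ℝ := fun j b => if j ∈ S ∧ b ≠ d j then 0 else q j b with hg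
  have hterm : ∀ d' : Fin n → Bool,
      (if (∀ j ∈ S, d' j = d j) then cpr p (fun ω => D ω = d') Cc else 0)
        = ∏ j, g j (d' j) := by
    intro d'
    split_ifs with hagree
    · rw [hind]
      refine Finset.prod_congr rfl fun j _ => ?_
      by_cases hj : j ∈ S
      · simp [hg, hq, hagree j hj, hj]
      · simp [hg, hq, hj]
    · push_neg at hagree
      obtain ⟨j, hjS, hjne⟩ := hagree
      exact (Finset.prod_eq_zero (Finset.mem_univ j) (by simp [hg, hjS, hjne])).symm
  simp_rw [hterm]
  rw [← Fintype.piFinset_univ, ← Finset.prod_univ_sum (fun _ => (Finset.univ : Finset Bool)) g]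
  have hsum : ∀ j, (∑ b : Bool, g j b)
      = if j ∈ S then q j (d j) else 1 := by
    intro j
    by_cases hj : j ∈ S
    · cases hdj : d j <;> simp [hg, Fintype.sum_bool, hj, hdj]
    · simp only [hg, Fintype.sum_bool, hj, false_and, if_false, if_neg hj]
      exact cpr_bool_sum p (fun ω => D ω j) Cc hC
  simp_rw [hsum]
  rw [Finset.prod_ite_mem, Finset.univ_inter]

/-- if the components of `D` are mutually independent conditional on `𝒞ᵢ`,
`Tᵢ = f(D_{N(i,K)})` is a K-neighborhood exposure mapping with `P(Tᵢ = s, 𝒞ᵢ) > 0`, and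
unconfoundedness `Yᵢ(·) ⊥ D | 𝒞ᵢ` holds, then
`E[Yᵢ | Tᵢ = s, 𝒞ᵢ] = Σ_d E[Yᵢ(d) | 𝒞ᵢ] · P(D_{N(i,K)} = d_{N(i,K)} | Tᵢ=s, 𝒞ᵢ) ·
P(D_{−N(i,K)} = d_{−N(i,K)} | 𝒞ᵢ)`. -/
theorem stmt17 {Ω : Type*} [Fintype Ω] {n : ℕ} {E : Type*}
    (p : Ω → ℝ) (hp : ∀ ω, 0 ≤ p ω) (hp1 : ∑ ω, p ω = 1)
    (Y : Fin n → (Fin n → Bool) → Ω → ℝ) (D : Ω → Fin n → Bool)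
    (C : Fin n → Ω → Prop) (N : Fin n → Finset (Fin n))
    (f : Fin n → (Fin n → Bool) → E) (i : Fin n) (s : E)
    -- `f` is a K-neighborhood exposure mapping
    (hf : ∀ (d d' : Fin n → Bool), (∀ j ∈ N i, d j = d' j) → f i d = f i d')
    -- components of D mutually independent conditional on 𝒞ᵢ
    (hind : ∀ d : Fin n → Bool,
      cpr p (fun ω => D ω = d) (C i) = ∏ j, cpr p (fun ω => D ω j = d j) (C i))
    -- unconfoundedness
    (hunc : ∀ (d dvec : Fin n → Bool),
      eiv p (fun ω => Y i d ω) (fun ω => D ω = dvec ∧ C i ω) * prb p (C i) =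
        eiv p (fun ω => Y i d ω) (C i) * prb p (fun ω => D ω = dvec ∧ C i ω))
    -- overlap
    (hC : 0 < prb p (C i))
    (hpos : 0 < prb p (fun ω => f i (D ω) = s ∧ C i ω)) :
    cexp p (fun ω => Y i (D ω) ω) (fun ω => f i (D ω) = s ∧ C i ω) =
      ∑ d : Fin n → Bool,
        cexp p (fun ω => Y i d ω) (C i) *
          cpr p (fun ω => ∀ j ∈ N i, D ω j = d j) (fun ω => f i (D ω) = s ∧ C i ω) *
          cpr p (fun ω => ∀ j ∉ N i, D ω j = d j) (C i) := by
  have hCne : prb p (C i) ≠ 0 := ne_of_gt hC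
  have hAne : prb p (fun ω => f i (D ω) = s ∧ C i ω) ≠ 0 := ne_of_gt hpos
  set q : Fin n → Bool → ℝ := fun j b => cpr p (fun ω => D ω j = b) (C i) with hq
  -- decompose the LHS numerator over assignment vectors
  have hLnum : eiv p (fun ω => Y i (D ω) ω) (fun ω => f i (D ω) = s ∧ C i ω)
      = ∑ d : Fin n → Bool, if f i d = s
          then eiv p (fun ω => Y i d ω) (fun ω => D ω = d ∧ C i ω) else 0 := by
    have := key_decomp p D (C i) (fun d => f i d = s) (fun d ω => Y i d ω)
    simpa [eiv] using this
  rw [cexp, hLnum, Finset.sum_div]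
  refine Finset.sum_congr rfl fun d _ => ?_
  -- key probability facts for this d
  have hprbDd : prb p (fun ω => D ω = d ∧ C i ω)
      = cpr p (fun ω => D ω = d) (C i) * prb p (C i) := by
    rw [cpr, div_mul_cancel₀ _ hCne]
  have hblockN : cpr p (fun ω => ∀ j ∈ N i, D ω j = d j) (C i) = ∏ j ∈ N i, q j (d j) :=
    block_prod p D (C i) d (N i) hCne hind
  have hblockNc : cpr p (fun ω => ∀ j ∉ N i, D ω j = d j) (C i)
      = ∏ j ∈ (N i)ᶜ, q j (d j) := by
    have hcongr : cpr p (fun ω => ∀ j ∉ N i, D ω j = d j) (C i)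
        = cpr p (fun ω => ∀ j ∈ (N i)ᶜ, D ω j = d j) (C i) := by
      unfold cpr
      congr 1
      exact prb_congr p fun ω => by simp [Finset.mem_compl]
    rw [hcongr]
    exact block_prod p D (C i) d ((N i)ᶜ) hCne hind
  have hfull : cpr p (fun ω => D ω = d) (C i)
      = (∏ j ∈ N i, q j (d j)) * ∏ j ∈ (N i)ᶜ, q j (d j) := by
    rw [hind d, Finset.prod_mul_prod_compl]
  -- the conditional probability of the N-block given the exposure event
  have hsplitA : prb p (fun ω => (∀ j ∈ N i, D ω j = d j) ∧ (f i (D ω) = s ∧ C i ω))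
      = if f i d = s
        then prb p (fun ω => (∀ j ∈ N i, D ω j = d j) ∧ C i ω) else 0 := by
    split_ifs with hfd
    · refine prb_congr p fun ω => ?_
      constructor
      · rintro ⟨h1, _, h3⟩; exact ⟨h1, h3⟩
      · rintro ⟨h1, h3⟩; exact ⟨h1, (hf (D ω) d h1).trans hfd, h3⟩
    · refine Finset.sum_eq_zero fun ω _ => ?_
      rw [if_neg]
      rintro ⟨h1, hs, _⟩
      exact hfd ((hf d (D ω) fun j hj => (h1 j hj).symm).trans hs)
  have hprbN : prb p (fun ω => (∀ j ∈ N i, D ω j = d j) ∧ C i ω)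
      = (∏ j ∈ N i, q j (d j)) * prb p (C i) := by
    rw [← hblockN, cpr, div_mul_cancel₀ _ hCne]
  -- unconfoundedness gives the value of the numerator on {D = d} ∩ C
  have huncd : eiv p (fun ω => Y i d ω) (fun ω => D ω = d ∧ C i ω)
      = eiv p (fun ω => Y i d ω) (C i) * prb p (fun ω => D ω = d ∧ C i ω) / prb p (C i) := by
    rw [← hunc d d, mul_div_assoc, div_self hCne, mul_one]
  rw [cexp, cpr, hsplitA, hprbN, hblockNc]
  split_ifs with hfd
  · rw [huncd, hprbDd, hfull]
    field_simp
  · simp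
end
end
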